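/- Let n ≥ 1 and let β = (β_1,…,β_d) be a partition of n. For an integer r, set T_r = Σ_{S ⊆ {1,…,d}} (−1)^{d−|S|} C(β_S, r) (the coefficient of y^r in ∏_{i=1}^d ((1+y)^{β_i} − 1)). Then, as polynomials in x, Σ_{m=1}^{n} Σ_{k=0}^{n−m} (−1)^k · c(m+k, m) · ((m+k)(m+k−1)/(m+k)!) · T_{n−m−k} · x^m = x(x−1) · Σ_{S ⊆ {1,…,d}} (−1)^{d−|S|} binom(x−2+β_S, n−2), where c(N, m) is the signless Stirling number of the first kind. -/

import Mathlib

open Polynomial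
open scoped Classical

/-- The cycle type of a permutation of `Fin n` as a partition of `n`,
including fixed points as parts equal to `1`. -/
noncomputable def fullCycleType {n : ℕ} (σ : Equiv.Perm (Fin n)) : Multiset ℕ :=
  σ.cycleType + Multiset.replicate (n - σ.cycleType.sum) 1

/-- The number of disjoint cycles of a permutation, fixed points included. -/
noncomputable def numCycles {n : ℕ} (σ : Equiv.Perm (Fin n)) : ℕ :=
  Multiset.card (fullCycleType σ)

/-- The set (conjugacy class) of permutations of `Fin n` with full cycle type `β`. -/
noncomputable def permClass (n : ℕ) (β : Multiset ℕ) : Finset (Equiv.Perm (Fin n)) :=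
  Finset.univ.filter (fun ω => fullCycleType ω = β)

/-- The polynomial `P_{[2,n-2],β}(x) = (n(n-1)/|C_β|) ⬝ Σ_{ρ(ω)=β} x^{κ(αω)}`. -/
noncomputable def Pperm {n : ℕ} (α : Equiv.Perm (Fin n)) (β : Multiset ℕ) : Polynomial ℚ :=
  Polynomial.C (((n : ℚ) * ((n : ℚ) - 1)) / ((permClass n β).card : ℚ)) *
    ∑ ω ∈ permClass n β, Polynomial.X ^ (numCycles (α * ω))

/-- The polynomial `binom(x + c, k)` in `x`: for `k ≥ 0` it is
`(x+c)(x+c-1)⋯(x+c-k+1)/k!`, and it is `0` for `k < 0`. -/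
noncomputable def binomPoly (c k : ℤ) : Polynomial ℚ :=
  if 0 ≤ k then
    (((k.toNat).factorial : ℚ))⁻¹ •
      ((descPochhammer ℚ k.toNat).comp (Polynomial.X + Polynomial.C (c : ℚ)))
  else 0

/-- The signless Stirling number of the first kind: the number of permutations of
an `N`-element set with exactly `m` cycles (fixed points included). -/
noncomputable def stirling1 (N m : ℕ) : ℕ :=
  (Finset.univ.filter (fun σ : Equiv.Perm (Fin N) => numCycles σ = m)).card

/-- For a Young diagram with row lengths `L` (rows and columns 0-indexed),
the product `∏_{u} (t + c(u))` over the cells `u`, `c(u)` being the content. -/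
def contentProd (L : List ℕ) (t : ℤ) : ℤ :=
  ∏ i ∈ Finset.range L.length, ∏ j ∈ Finset.range (L.getD i 0), (t + (j : ℤ) - (i : ℤ))

/-- `C(a, b)` for an integer `b`: the usual binomial coefficient when `b ≥ 0`
(which is `0` for `b > a`), and `0` when `b < 0`. -/
def chooseZ (a : ℕ) (b : ℤ) : ℚ := if 0 ≤ b then (a.choose b.toNat : ℚ) else 0


open Equiv Equiv.Perm Finset

section Aux
variable {α : Type*} [DecidableEq α] [Fintype α]
/-- Inserting a point into a cycle: support. -/
lemma support_swap_mul_cycle {c : Perm α} {a b : α}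
    (ha : a ∉ c.support) (hb : b ∈ c.support) :
    (Equiv.swap a b * c).support = insert a c.support := by
  have hca : c a = a := by simpa using ha
  have hab : a ≠ b := fun h => ha (h ▸ hb)
  have hcb : c b ≠ b := Equiv.Perm.mem_support.mp hb
  ext y
  simp only [Equiv.Perm.mem_support, Finset.mem_insert, Equiv.Perm.mul_apply]
  by_cases hya : y = a
  · subst hya
    simp [hca, Equiv.swap_apply_left, hab, Ne.symm hab]
  · have hcya : c y ≠ a := fun h => hya (c.injective (h.trans hca.symm))
    constructor
    · intro h
      right
      intro hcy
      rw [hcy] at h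
      apply h
      apply Equiv.swap_apply_of_ne_of_ne hya
      rintro rfl
      exact hcb hcy
    · rintro (rfl | hy)
      · exact absurd rfl hya
      · by_cases hcyb : c y = b
        · rw [hcyb, Equiv.swap_apply_right]
          exact Ne.symm hya
        · rw [Equiv.swap_apply_of_ne_of_ne hcya hcyb]
          exact hy

/-- Inserting a point into a cycle gives a cycle. -/
lemma isCycle_swap_mul_cycle {c : Perm α} (hc : c.IsCycle) {a b : α}
    (ha : a ∉ c.support) (hb : b ∈ c.support) :
    (Equiv.swap a b * c).IsCycle := by
  have hca : c a = a := by simpa using ha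
  have hab : a ≠ b := fun h => ha (h ▸ hb)
  have hcb : c b ≠ b := Equiv.Perm.mem_support.mp hb
  set f := Equiv.swap a b * c with hf
  have hfa : f a = b := by simp [hf, hca]
  have key : ∀ i : ℕ, f.SameCycle a ((c ^ i) b) := by
    intro i
    induction i with
    | zero => exact ⟨1, by simpa using hfa⟩
    | succ i ih =>
      have hmem : (c ^ i) b ∈ c.support := by
        rw [Equiv.Perm.pow_apply_mem_support]; exact hb
      by_cases h : c ((c ^ i) b) = b
      · have : (c ^ (i+1)) b = b := by
          have e : (c ^ (i+1)) b = c ((c ^ i) b) := by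
            rw [← Equiv.Perm.mul_apply, ← pow_succ']
          rw [e]; exact h
        rw [this]; exact ⟨1, by simpa using hfa⟩
      · have hne_a : c ((c ^ i) b) ≠ a := by
          intro hh
          apply ha
          have hmem' : c ((c ^ i) b) ∈ c.support := by
            rw [Equiv.Perm.apply_mem_support]; exact hmem
          rwa [hh] at hmem'
        have step : f ((c ^ i) b) = (c ^ (i+1)) b := by
          rw [pow_succ', hf, Equiv.Perm.mul_apply, Equiv.Perm.mul_apply]
          exact Equiv.swap_apply_of_ne_of_ne hne_a h
        exact ih.trans ⟨1, by simpa using step⟩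
  refine ⟨a, by rw [hfa]; exact Ne.symm hab, ?_⟩
  intro y hy
  have hy' : y ∈ f.support := Equiv.Perm.mem_support.mpr hy
  rw [hf, support_swap_mul_cycle ha hb, Finset.mem_insert] at hy'
  rcases hy' with rfl | hy'
  · exact Equiv.Perm.SameCycle.refl _ _
  · have : c.SameCycle b y := by
      obtain ⟨x, hx, hall⟩ := hc
      exact ((hall hcb).symm.trans (hall (Equiv.Perm.mem_support.mp hy')))
    obtain ⟨i, _, hi⟩ := this.exists_pow_eq'
    rw [← hi]
    exact key i


/-- orbit count: number of cycles plus number of fixed points -/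
noncomputable def OC (σ : Perm α) : ℕ :=
  Multiset.card σ.cycleType + (Fintype.card α - σ.support.card)

lemma OC_swap_mul {σ : Perm α} {a b : α} (ha : σ a = a) (hab : a ≠ b) :
    OC (Equiv.swap a b * σ) + 1 = OC σ := by
  have ha' : a ∉ σ.support := by simp [ha]
  by_cases hb : σ b = b
  · -- swap disjoint from σ
    have hd : (Equiv.swap a b).Disjoint σ := by
      intro x
      by_cases hx : x = a ∨ x = b
      · rcases hx with rfl | rfl
        · right; exact ha
        · right; exact hb
      · push_neg at hx
        left; exact Equiv.swap_apply_of_ne_of_ne hx.1 hx.2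
    have hct : (Equiv.swap a b * σ).cycleType = (Equiv.swap a b).cycleType + σ.cycleType :=
      hd.cycleType_mul
    have hsw : (Equiv.swap a b).cycleType = {2} := by
      have := (isCycle_swap hab).cycleType
      rw [this, Equiv.Perm.support_swap hab]
      simp [hab]
    have hsupp : (Equiv.swap a b * σ).support = (Equiv.swap a b).support ∪ σ.support :=
      hd.support_mul
    have hb' : b ∉ σ.support := by simp [hb]
    have hcard : (Equiv.swap a b * σ).support.card = σ.support.card + 2 := by
      rw [hsupp, Equiv.Perm.support_swap hab]
      rw [Finset.card_union_of_disjoint (by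
        simp only [Finset.disjoint_left, Finset.mem_insert, Finset.mem_singleton]
        rintro x (rfl | rfl) <;> simp [ha', hb'] <;> simp_all)]
      simp [hab, add_comm]
    have hle : σ.support.card + 2 ≤ Fintype.card α := by
      rw [← hcard]; exact Finset.card_le_univ _
    unfold OC
    rw [hct, hsw, hcard]
    simp only [Multiset.card_add, Multiset.card_singleton]
    omega
  · -- b in a genuine cycle of σ
    set c := σ.cycleOf b with hc
    have hcyc : c.IsCycle := isCycle_cycleOf σ hb
    set g : Perm α := c⁻¹ * σ with hg
    have hcg : c * g = σ := by rw [hg, ← mul_assoc, mul_inv_cancel, one_mul]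
    have hdis : c.Disjoint g := by
      intro x
      by_cases hx : σ.SameCycle b x
      · right
        have hcx : c x = σ x := hx.cycleOf_apply
        have : g x = c⁻¹ (σ x) := rfl
        rw [this, ← hcx]
        exact c.symm_apply_apply x
      · left
        exact cycleOf_apply_of_not_sameCycle hx
    have hbc : b ∈ c.support := by
      rw [mem_support_cycleOf_iff]
      exact ⟨Equiv.Perm.SameCycle.refl _ _, Equiv.Perm.mem_support.mpr hb⟩
    have hac : a ∉ c.support := fun h => ha' (support_cycleOf_le σ b h)
    have hic := isCycle_swap_mul_cycle hcyc hac hbc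
    have hsup2 := support_swap_mul_cycle hac hbc
    have hag : a ∉ g.support := by
      have : g a = a := by
        have hca : c a = a := by simpa using hac
        have : g a = c⁻¹ (σ a) := rfl
        rw [this, ha]
        conv_lhs => rw [← hca]
        exact c.symm_apply_apply a
      simp [this]
    have hdis2 : (Equiv.swap a b * c).Disjoint g := by
      rw [Equiv.Perm.disjoint_iff_disjoint_support, hsup2]
      rw [Finset.disjoint_left]
      intro x hx
      rw [Finset.mem_insert] at hx
      rcases hx with rfl | hx
      · exact hag
      · exact Finset.disjoint_left.mp (Equiv.Perm.disjoint_iff_disjoint_support.mp hdis) hx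
    -- compute cycle types and support cards
    have hct : (Equiv.swap a b * σ).cycleType
        = {c.support.card + 1} + g.cycleType := by
      have : Equiv.swap a b * σ = (Equiv.swap a b * c) * g := by
        rw [mul_assoc, hcg]
      rw [this, hdis2.cycleType_mul, hic.cycleType, hsup2,
        Finset.card_insert_of_notMem hac]
    have hctσ : σ.cycleType = {c.support.card} + g.cycleType := by
      rw [← hcg, hdis.cycleType_mul, hcyc.cycleType]
    have hsupσ : σ.support = c.support ∪ g.support := by rw [← hcg, hdis.support_mul]
    have hsupτ : (Equiv.swap a b * σ).support = insert a σ.support := by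
      have : Equiv.swap a b * σ = (Equiv.swap a b * c) * g := by
        rw [mul_assoc, hcg]
      rw [this, hdis2.support_mul, hsup2, hsupσ, Finset.insert_union]
    have hcard : (Equiv.swap a b * σ).support.card = σ.support.card + 1 := by
      rw [hsupτ, Finset.card_insert_of_notMem ha']
    have hle : σ.support.card + 1 ≤ Fintype.card α := by
      rw [← hcard]; exact Finset.card_le_univ _
    unfold OC
    rw [hct, hctσ, hcard]
    simp only [Multiset.card_add, Multiset.card_singleton]
    omega

end Aux

lemma numCycles_eq_OC {n : ℕ} (σ : Perm (Fin n)) : numCycles σ = OC σ := by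
  unfold numCycles fullCycleType OC
  rw [Multiset.card_add, Multiset.card_replicate, Equiv.Perm.sum_cycleType,
    Fintype.card_fin]

def finSuccEquivNeZero (n : ℕ) : Fin n ≃ {x : Fin (n+1) // x ≠ 0} where
  toFun y := ⟨y.succ, Fin.succ_ne_zero y⟩
  invFun x := (x.1).pred x.2
  left_inv y := by simp
  right_inv x := by simp

lemma decomposeFin_zero_eq {n : ℕ} (e : Perm (Fin n)) :
    Equiv.Perm.decomposeFin.symm (0, e) = e.extendDomain (finSuccEquivNeZero n) := by
  ext x
  refine Fin.cases ?_ ?_ x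
  · rw [Equiv.Perm.decomposeFin_symm_apply_zero,
      Equiv.Perm.extendDomain_apply_not_subtype _ _ (by simp)]
  · intro y
    rw [Equiv.Perm.decomposeFin_symm_apply_succ,
      Equiv.Perm.extendDomain_apply_subtype _ (finSuccEquivNeZero n) (Fin.succ_ne_zero y)]
    simp [finSuccEquivNeZero, Equiv.swap_apply_of_ne_of_ne (Fin.succ_ne_zero (e y))]

lemma OC_decomposeFin_zero {n : ℕ} (e : Perm (Fin n)) :
    OC (Equiv.Perm.decomposeFin.symm (0, e)) = OC e + 1 := by
  rw [decomposeFin_zero_eq]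
  unfold OC
  rw [Equiv.Perm.cycleType_extendDomain, Equiv.Perm.card_support_extend_domain,
    Fintype.card_fin, Fintype.card_fin]
  have := Finset.card_le_univ e.support
  rw [Fintype.card_fin] at this
  omega

lemma decomposeFin_eq_swap_mul {n : ℕ} (p : Fin (n+1)) (e : Perm (Fin n)) :
    Equiv.Perm.decomposeFin.symm (p, e)
      = Equiv.swap 0 p * Equiv.Perm.decomposeFin.symm (0, e) := by
  ext x
  refine Fin.cases ?_ ?_ x
  · simp
  · intro y
    simp [Equiv.Perm.decomposeFin_symm_apply_succ, Equiv.Perm.mul_apply]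

lemma numCycles_decomposeFin {n : ℕ} (p : Fin (n+1)) (e : Perm (Fin n)) :
    numCycles (Equiv.Perm.decomposeFin.symm (p, e))
      = numCycles e + (if p = 0 then 1 else 0) := by
  rw [numCycles_eq_OC, numCycles_eq_OC]
  by_cases hp : p = 0
  · subst hp; simp [OC_decomposeFin_zero]
  · rw [decomposeFin_eq_swap_mul]
    have h0 : (Equiv.Perm.decomposeFin.symm ((0 : Fin (n+1)), e)) 0 = 0 :=
      Equiv.Perm.decomposeFin_symm_apply_zero 0 e
    have := OC_swap_mul (σ := Equiv.Perm.decomposeFin.symm ((0 : Fin (n+1)), e))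
      (a := 0) (b := p) h0 (Ne.symm hp)
    rw [OC_decomposeFin_zero] at this
    simp [hp]
    omega

lemma multiset_card_le_sum (s : Multiset ℕ) (h : ∀ x ∈ s, 1 ≤ x) :
    Multiset.card s ≤ s.sum := by
  induction s using Multiset.induction with
  | empty => simp
  | cons a s ih =>
    rw [Multiset.card_cons, Multiset.sum_cons]
    have h1 : 1 ≤ a := h a (Multiset.mem_cons_self a s)
    have h2 := ih (fun x hx => h x (Multiset.mem_cons_of_mem hx))
    omega

lemma sum_fullCycleType {n : ℕ} (σ : Perm (Fin n)) : (fullCycleType σ).sum = n := by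
  unfold fullCycleType
  rw [Multiset.sum_add, Multiset.sum_replicate, smul_eq_mul, mul_one,
    Equiv.Perm.sum_cycleType]
  have := Finset.card_le_univ σ.support
  rw [Fintype.card_fin] at this
  omega

lemma numCycles_le {n : ℕ} (σ : Perm (Fin n)) : numCycles σ ≤ n := by
  unfold numCycles
  have h := multiset_card_le_sum (fullCycleType σ) ?_
  · rw [sum_fullCycleType] at h; exact h
  intro x hx
  unfold fullCycleType at hx
  rw [Multiset.mem_add] at hx
  rcases hx with hx | hx
  · exact le_trans (by norm_num) (Equiv.Perm.two_le_of_mem_cycleType hx)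
  · rw [Multiset.eq_of_mem_replicate hx]

lemma numCycles_pos {n : ℕ} (hn : 1 ≤ n) (σ : Perm (Fin n)) : 1 ≤ numCycles σ := by
  by_contra h
  push_neg at h
  interval_cases h' : numCycles σ
  unfold numCycles at h'
  have := sum_fullCycleType σ
  rw [Multiset.card_eq_zero.mp h'] at this
  simp at this
  omega

lemma stirling1_eq_zero_of_lt {N m : ℕ} (h : N < m) : stirling1 N m = 0 := by
  unfold stirling1
  rw [Finset.card_eq_zero, Finset.filter_eq_empty_iff]
  intro σ _
  exact fun hm => absurd (hm ▸ numCycles_le σ) (by omega)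

lemma stirling1_zero_eq_zero {N : ℕ} (h : 1 ≤ N) : stirling1 N 0 = 0 := by
  unfold stirling1
  rw [Finset.card_eq_zero, Finset.filter_eq_empty_iff]
  intro σ _
  have := numCycles_pos h σ
  omega

lemma sum_X_pow_numCycles (N : ℕ) :
    ∑ σ : Perm (Fin N), (Polynomial.X : ℚ[X]) ^ numCycles σ = ascPochhammer ℚ N := by
  induction N with
  | zero =>
    rw [ascPochhammer_zero]
    rw [Finset.sum_eq_single (1 : Perm (Fin 0)) (fun b _ hb => absurd (Subsingleton.elim b 1) hb)
      (by simp)]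
    have : numCycles (1 : Perm (Fin 0)) = 0 := by
      unfold numCycles fullCycleType
      simp [Equiv.Perm.cycleType_one]
    rw [this, pow_zero]
  | succ n ih =>
    rw [ascPochhammer_succ_right, ← ih]
    rw [← Equiv.sum_comp (Equiv.Perm.decomposeFin.symm :
      Fin (n+1) × Perm (Fin n) ≃ Perm (Fin (n+1)))
      (fun σ => (Polynomial.X : ℚ[X]) ^ numCycles σ)]
    rw [Fintype.sum_prod_type_right]
    have : ∀ e : Perm (Fin n), ∑ p : Fin (n+1),
        (Polynomial.X : ℚ[X]) ^ numCycles (Equiv.Perm.decomposeFin.symm (p, e))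
        = (Polynomial.X : ℚ[X]) ^ numCycles e * (Polynomial.X + (n : ℚ[X])) := by
      intro e
      have he : ∀ p : Fin (n+1), (Polynomial.X : ℚ[X]) ^ numCycles (Equiv.Perm.decomposeFin.symm (p, e))
          = if p = 0 then Polynomial.X ^ (numCycles e + 1) else Polynomial.X ^ numCycles e := by
        intro p
        rw [numCycles_decomposeFin]
        by_cases hp : p = 0 <;> simp [hp]
      rw [Finset.sum_congr rfl (fun p _ => he p)]
      rw [Fin.sum_univ_succ]
      simp only [if_pos rfl, Fin.succ_ne_zero, if_neg, ite_false]
      rw [Finset.sum_const, Finset.card_univ, Fintype.card_fin, nsmul_eq_mul, pow_succ]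
      push_cast
      ring
    rw [Finset.sum_congr rfl (fun e _ => this e), ← Finset.sum_mul]

lemma asc_eq_sum_stirling (N : ℕ) :
    ascPochhammer ℚ N = ∑ m ∈ Finset.range (N+1), (stirling1 N m : ℚ) • (Polynomial.X : ℚ[X]) ^ m := by
  rw [← sum_X_pow_numCycles]
  rw [← Finset.sum_fiberwise_of_maps_to (g := numCycles) (t := Finset.range (N+1))
    (fun σ _ => Finset.mem_range.mpr (Nat.lt_succ_of_le (numCycles_le σ)))]
  refine Finset.sum_congr rfl fun m _ => ?_
  rw [Finset.sum_congr rfl (fun σ hσ => by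
    rw [(Finset.mem_filter.mp hσ).2]), Finset.sum_const]
  rw [stirling1]
  simp [nsmul_eq_mul, Polynomial.smul_eq_C_mul]

lemma desc_eq_sum_stirling (N : ℕ) :
    descPochhammer ℚ N = ∑ m ∈ Finset.range (N+1),
      ((-1 : ℚ) ^ (N - m) * (stirling1 N m : ℚ)) • (Polynomial.X : ℚ[X]) ^ m := by
  apply Polynomial.funext
  intro r
  have h1 : (ascPochhammer ℚ N).eval (-r) = (-1) ^ N * (descPochhammer ℚ N).eval r :=
    ascPochhammer_eval_neg_eq_descPochhammer (R := ℚ) r N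
  have h2 : (descPochhammer ℚ N).eval r = (-1) ^ N * (ascPochhammer ℚ N).eval (-r) := by
    rw [h1]; rw [← mul_assoc, ← mul_pow]; simp
  rw [h2, asc_eq_sum_stirling]
  rw [Polynomial.eval_finset_sum, Polynomial.eval_finset_sum]
  rw [Finset.mul_sum]
  refine Finset.sum_congr rfl fun m hm => ?_
  have hm' : m ≤ N := Nat.lt_succ_iff.mp (Finset.mem_range.mp hm)
  simp only [Polynomial.eval_smul, Polynomial.eval_pow, Polynomial.eval_X, smul_eq_mul]
  have hsign : (-1 : ℚ) ^ N = (-1) ^ (N - m) * (-1) ^ m := by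
    rw [← pow_add]; congr 1; omega
  rw [hsign, neg_pow r m]
  have h3 : (-1 : ℚ) ^ m * (-1) ^ m = 1 := by
    rw [← pow_add]
    exact (neg_one_pow_eq_one_iff_even (by norm_num)).mpr ⟨m, by omega⟩
  calc (-1:ℚ) ^ (N-m) * (-1:ℚ)^m * ((stirling1 N m : ℚ) * ((-1)^m * r^m))
      = ((-1:ℚ)^(N-m) * (stirling1 N m : ℚ)) * r ^ m * ((-1:ℚ)^m * (-1:ℚ)^m) := by ring
    _ = (-1:ℚ)^(N-m) * (stirling1 N m : ℚ) * r ^ m := by rw [h3, mul_one]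

lemma binomPoly_natCast (c : ℤ) (k : ℕ) :
    binomPoly c (k : ℤ) = ((k.factorial : ℚ))⁻¹ •
      ((descPochhammer ℚ k).comp (Polynomial.X + Polynomial.C (c : ℚ))) := by
  rw [binomPoly, if_pos (by positivity), Int.toNat_natCast]

lemma binomPoly_eval_nat (c : ℤ) (k : ℕ) (s : ℕ) (h : 0 ≤ (s : ℤ) + c) :
    (binomPoly c (k : ℤ)).eval (s : ℚ) = ((((s : ℤ) + c).toNat).choose k : ℚ) := by
  rw [binomPoly_natCast]
  rw [Polynomial.eval_smul, Polynomial.eval_comp]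
  simp only [Polynomial.eval_add, Polynomial.eval_X, Polynomial.eval_C]
  have hcast : (s : ℚ) + (c : ℚ) = ((((s : ℤ) + c).toNat : ℕ) : ℚ) := by
    have h2 : ((((s:ℤ)+c).toNat : ℕ) : ℤ) = (s:ℤ)+c := Int.toNat_of_nonneg h
    exact_mod_cast h2.symm
  rw [hcast, descPochhammer_eval_eq_descFactorial,
    Nat.descFactorial_eq_factorial_mul_choose]
  have : (k.factorial : ℚ) ≠ 0 := by positivity
  push_cast
  simp only [smul_eq_mul]
  field_simp

lemma vandermonde_poly (b M : ℕ) :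
    ∑ j ∈ Finset.range (M+1), ((b.choose (M - j) : ℚ)) • binomPoly (-2) (j : ℤ)
      = binomPoly ((b : ℤ) - 2) (M : ℤ) := by
  apply Polynomial.eq_of_infinite_eval_eq
  apply Set.infinite_of_injective_forall_mem
    (f := fun t : ℕ => ((t + 2 : ℕ) : ℚ))
  · intro a b hab
    have : (a + 2 : ℕ) = (b + 2 : ℕ) := Nat.cast_injective hab
    omega
  · intro t
    simp only [Set.mem_setOf_eq]
    rw [Polynomial.eval_finset_sum]
    have h1 : ∀ j ∈ Finset.range (M+1),
        (((b.choose (M - j) : ℚ)) • binomPoly (-2) (j:ℤ)).eval ((t + 2 : ℕ) : ℚ)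
          = (b.choose (M - j) : ℚ) * (t.choose j : ℚ) := by
      intro j _
      rw [Polynomial.eval_smul, binomPoly_eval_nat (-2) j (t+2) (by push_cast; omega)]
      rw [smul_eq_mul, show ((((t+2:ℕ):ℤ)) + (-2)).toNat = t by push_cast; omega]
    rw [Finset.sum_congr rfl h1]
    rw [binomPoly_eval_nat ((b:ℤ)-2) M (t+2) (by push_cast; omega)]
    have h2 : (((t + 2 : ℕ) : ℤ) + ((b:ℤ) - 2)).toNat = t + b := by omega
    rw [h2]
    have := Nat.add_choose_eq t b M
    rw [Finset.Nat.sum_antidiagonal_eq_sum_range_succ_mk] at this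
    rw [show t + b = t + b from rfl] at this
    push_cast [this]
    refine Finset.sum_congr rfl fun j hj => ?_
    ring

lemma desc_shift (N : ℕ) :
    descPochhammer ℚ (N + 2)
      = Polynomial.X * (Polynomial.X - 1) * ((descPochhammer ℚ N).comp (Polynomial.X - 2)) := by
  rw [show N + 2 = (N + 1) + 1 from rfl, descPochhammer_succ_left,
    descPochhammer_succ_left]
  have hc : ((Polynomial.X : ℚ[X]) - 1).comp (Polynomial.X - 1) = Polynomial.X - 2 := by
    simp [Polynomial.sub_comp]
    ring
  rw [Polynomial.mul_comp, Polynomial.X_comp, Polynomial.comp_assoc, hc]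
  ring

noncomputable def w (N : ℕ) : ℚ := (N : ℚ) * ((N : ℚ) - 1) / (N.factorial : ℚ)

lemma w_zero : w 0 = 0 := by simp [w]
lemma w_one : w 1 = 0 := by simp [w]
lemma w_add_two (j : ℕ) : w (j + 2) = ((j.factorial : ℚ))⁻¹ := by
  unfold w
  rw [show j + 2 = (j+1)+1 from rfl, Nat.factorial_succ, Nat.factorial_succ]
  push_cast
  have h1 : ((j:ℚ)+1) ≠ 0 := by positivity
  have h2 : ((j:ℚ)+1+1) ≠ 0 := by positivity
  have h3 : (j.factorial : ℚ) ≠ 0 := by positivity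
  field_simp
  ring


/-- the generating-function identity with weight `(m+k)(m+k−1)` and the
coefficients `T_r` of `∏_i ((1+y)^{β_i} − 1)`. -/
theorem stirling_binom_gf_weighted (n d : ℕ) (hn : 1 ≤ n) (β : Fin d → ℕ)
    (hβ : ∀ i, 1 ≤ β i) (hsum : ∑ i, β i = n)
    (T : ℕ → ℚ)
    (hT : ∀ r, T r = ∑ S : Finset (Fin d), (-1 : ℚ) ^ (d - S.card) *
      (((∑ i ∈ S, β i).choose r : ℕ) : ℚ)) :
    ∑ m ∈ Finset.Icc 1 n, ∑ k ∈ Finset.range (n - m + 1),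
        ((-1 : ℚ) ^ k * (stirling1 (m + k) m : ℚ) *
          (((m + k : ℕ) : ℚ) * (((m + k : ℕ) : ℚ) - 1) / (((m + k).factorial : ℚ))) *
          T (n - m - k)) • Polynomial.X ^ m =
      Polynomial.X * (Polynomial.X - 1) *
        ∑ S : Finset (Fin d), ((-1 : ℚ) ^ (d - S.card)) •
          binomPoly ((∑ i ∈ S, β i : ℤ) - 2) ((n : ℤ) - 2) := by
  rcases Nat.lt_or_ge n 2 with hn2 | hn2
  · -- n = 1
    have hn1 : n = 1 := by omega
    subst hn1
    rw [Finset.Icc_self, Finset.sum_singleton]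
    rw [show (1:ℕ) - 1 + 1 = 1 from rfl, Finset.sum_range_one]
    have hz : ((-1 : ℚ) ^ 0 * (stirling1 (1 + 0) 1 : ℚ) *
          (((1 + 0 : ℕ) : ℚ) * (((1 + 0 : ℕ) : ℚ) - 1) / (((1 + 0).factorial : ℚ))) *
          T (1 - 1 - 0)) = 0 := by norm_num
    rw [hz, zero_smul]
    have hb : ∀ S : Finset (Fin d), ((-1 : ℚ) ^ (d - S.card)) •
        binomPoly ((∑ i ∈ S, β i : ℤ) - 2) (((1:ℕ) : ℤ) - 2) = 0 := by
      intro S; rw [binomPoly, if_neg (by norm_num), smul_zero]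
    rw [Finset.sum_congr rfl (fun S _ => hb S), Finset.sum_const, smul_zero, mul_zero]
  · -- main case, n ≥ 2
    set F : ℕ → ℕ → ℚ[X] := fun N m =>
      ((-1 : ℚ) ^ (N - m) * (stirling1 N m : ℚ) * w N * T (n - N)) • (Polynomial.X : ℚ[X]) ^ m
      with hF
    have stepA : ∑ m ∈ Finset.Icc 1 n, ∑ k ∈ Finset.range (n - m + 1),
        ((-1 : ℚ) ^ k * (stirling1 (m + k) m : ℚ) *
          (((m + k : ℕ) : ℚ) * (((m + k : ℕ) : ℚ) - 1) / (((m + k).factorial : ℚ))) *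
          T (n - m - k)) • (Polynomial.X : ℚ[X]) ^ m
        = ∑ N ∈ Finset.range (n+1), ∑ m ∈ Finset.range (n+1), F N m := by
      have inner : ∀ m ∈ Finset.Icc 1 n, (∑ k ∈ Finset.range (n - m + 1),
          ((-1 : ℚ) ^ k * (stirling1 (m + k) m : ℚ) *
          (((m + k : ℕ) : ℚ) * (((m + k : ℕ) : ℚ) - 1) / (((m + k).factorial : ℚ))) *
          T (n - m - k)) • (Polynomial.X : ℚ[X]) ^ m)
          = ∑ N ∈ Finset.range (n+1), F N m := by
        intro m hm
        obtain ⟨hm1, hm2⟩ := Finset.mem_Icc.mp hm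
        have hsplit : ∑ N ∈ Finset.range (n+1), F N m
            = ∑ N ∈ Finset.Ico 0 m, F N m + ∑ N ∈ Finset.Ico m (n+1), F N m := by
          rw [Finset.range_eq_Ico,
            ← Finset.sum_Ico_consecutive _ (Nat.zero_le m) (by omega : m ≤ n+1)]
        rw [hsplit]
        have first : ∑ N ∈ Finset.Ico 0 m, F N m = 0 := by
          apply Finset.sum_eq_zero
          intro N hN
          have : N < m := (Finset.mem_Ico.mp hN).2
          rw [hF]
          simp [stirling1_eq_zero_of_lt this]
        rw [first, zero_add]
        conv_rhs => rw [Finset.sum_Ico_eq_sum_range]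
        rw [show n + 1 - m = n - m + 1 by omega]
        refine Finset.sum_congr rfl fun k hk => (Eq.symm ?_)
        rw [hF]
        simp only
        congr 1
        rw [show m + k - m = k by omega, show n - (m + k) = n - m - k by omega]
        unfold w
        ring
      rw [Finset.sum_congr rfl inner]
      rw [Finset.sum_subset (fun x hx => Finset.mem_range.mpr
        (Nat.lt_succ_of_le (Finset.mem_Icc.mp hx).2))
        (fun m hm hm' => ?_)]
      · exact Finset.sum_comm
      · have hm0 : m = 0 := by
          rw [Finset.mem_range] at hm
          rw [Finset.mem_Icc] at hm'
          omega
        subst hm0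
        apply Finset.sum_eq_zero
        intro N _
        rw [hF]
        rcases Nat.eq_zero_or_pos N with rfl | hN
        · simp [w_zero]
        · simp [stirling1_zero_eq_zero hN]
    have stepB : ∑ N ∈ Finset.range (n+1), ∑ m ∈ Finset.range (n+1), F N m
        = ∑ N ∈ Finset.range (n+1), (w N * T (n - N)) • descPochhammer ℚ N := by
      refine Finset.sum_congr rfl fun N hN => ?_
      have hNn : N ≤ n := Nat.lt_succ_iff.mp (Finset.mem_range.mp hN)
      have h0 : ∑ m ∈ Finset.range (n+1), F N m = ∑ m ∈ Finset.range (N+1), F N m := by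
        refine (Finset.sum_subset (fun x hx => Finset.mem_range.mpr ?_) fun m _ hm' => ?_).symm
        · have := Finset.mem_range.mp hx; omega
        · have hNm : N < m := by
            by_contra hc
            exact hm' (Finset.mem_range.mpr (by omega))
          rw [hF]
          simp [stirling1_eq_zero_of_lt hNm]
      rw [h0, desc_eq_sum_stirling N, Finset.smul_sum]
      refine Finset.sum_congr rfl fun m _ => ?_
      rw [hF]
      simp only [smul_smul]
      congr 1
      ring
    have stepC : ∑ N ∈ Finset.range (n+1), (w N * T (n - N)) • descPochhammer ℚ N
        = Polynomial.X * (Polynomial.X - 1) *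
          ∑ j ∈ Finset.range (n-1), T (n - 2 - j) • binomPoly (-2) (j : ℤ) := by
      have hsplit : ∑ N ∈ Finset.range (n+1), (w N * T (n - N)) • descPochhammer ℚ N
          = ∑ N ∈ Finset.Ico 0 2, (w N * T (n - N)) • descPochhammer ℚ N
            + ∑ N ∈ Finset.Ico 2 (n+1), (w N * T (n - N)) • descPochhammer ℚ N := by
        rw [Finset.range_eq_Ico,
          ← Finset.sum_Ico_consecutive _ (Nat.zero_le 2) (by omega : 2 ≤ n+1)]
      rw [hsplit]
      have h01 : ∑ N ∈ Finset.Ico 0 2, (w N * T (n - N)) • descPochhammer ℚ N = 0 := by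
        apply Finset.sum_eq_zero
        intro N hN
        have : N < 2 := (Finset.mem_Ico.mp hN).2
        interval_cases N
        · simp [w_zero]
        · simp [w_one]
      rw [h01, zero_add, Finset.sum_Ico_eq_sum_range,
        show n + 1 - 2 = n - 1 by omega, Finset.mul_sum]
      refine Finset.sum_congr rfl fun j hj => ?_
      rw [show 2 + j = j + 2 by omega, desc_shift j, w_add_two j,
        show n - (j + 2) = n - 2 - j by omega]
      have hb : binomPoly (-2) (j : ℤ)
          = ((j.factorial : ℚ))⁻¹ • ((descPochhammer ℚ j).comp (Polynomial.X - 2)) := by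
        rw [binomPoly_natCast,
          show (Polynomial.C (((-2:ℤ):ℚ))) = (-2 : ℚ[X]) from by
            simp only [Int.cast_neg, Int.cast_ofNat, map_neg, map_ofNat],
          show (Polynomial.X : ℚ[X]) + -2 = Polynomial.X - 2 from by ring]
      rw [hb, smul_smul, mul_smul_comm, mul_comm]
    have stepD : ∑ j ∈ Finset.range (n-1), T (n - 2 - j) • binomPoly (-2) (j : ℤ)
        = ∑ S : Finset (Fin d), ((-1 : ℚ) ^ (d - S.card)) •
          binomPoly ((∑ i ∈ S, β i : ℤ) - 2) ((n : ℤ) - 2) := by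
      have h1 : ∀ j ∈ Finset.range (n-1), T (n - 2 - j) • binomPoly (-2) (j : ℤ)
          = ∑ S : Finset (Fin d), ((-1 : ℚ) ^ (d - S.card)) •
              ((((∑ i ∈ S, β i).choose (n - 2 - j) : ℕ) : ℚ) • binomPoly (-2) (j : ℤ)) := by
        intro j _
        rw [hT (n - 2 - j), Finset.sum_smul]
        refine Finset.sum_congr rfl fun S _ => ?_
        rw [smul_smul]
      rw [Finset.sum_congr rfl h1, Finset.sum_comm]
      refine Finset.sum_congr rfl fun S _ => ?_
      rw [← Finset.smul_sum]
      congr 1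
      have hM : n - 1 = (n - 2) + 1 := by omega
      rw [hM]
      have := vandermonde_poly (∑ i ∈ S, β i) (n - 2)
      have hsub : ∀ j, n - 2 - j = (n - 2) - j := fun j => rfl
      rw [this]
      congr 1
      · push_cast
        ring
      · omega
    rw [stepA, stepB, stepC, stepD]
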